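/- With the same notation, the leading-order defaultable put price satisfies Put₀ = -x + x N(d₁) - K B₁ N(d₂) + K B₀, where B₁ = B₀^c(t,r;z,T,1) is the discount factor including the default intensity (l = 1), B₀ = B₀^c(t,r;z,T,0) is the default-free discount factor, and d_{1,2} = (log(x/(K B₁)) ± v/2)/√v; equivalently, put-call parity holds in the defaultable model: Put₀ - C₀ = -x + K B₀ for the payoffs in the jump-to-default framework. -/

import Mathlib

open Real MeasureTheory

/-- Standard normal cumulative distribution function. -/
noncomputable def stdNormalCDF (d : ℝ) : ℝ :=
  ∫ s in Set.Iic d, (Real.sqrt (2 * Real.pi))⁻¹ * Real.exp (-s ^ 2 / 2)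

lemma stdGauss_integrable :
    Integrable (fun s : ℝ => (Real.sqrt (2 * π))⁻¹ * Real.exp (-s ^ 2 / 2)) := by
  have h := (integrable_exp_neg_mul_sq (by norm_num : (0:ℝ) < 1/2)).const_mul
    (Real.sqrt (2 * π))⁻¹
  have he : ∀ s : ℝ, -s ^ 2 / 2 = -(1/2) * s ^ 2 := fun s => by ring
  simpa [he] using h

lemma stdGauss_total :
    ∫ s : ℝ, (Real.sqrt (2 * π))⁻¹ * Real.exp (-s ^ 2 / 2) = 1 := by
  have he : ∀ s : ℝ, -s ^ 2 / 2 = -(1/2) * s ^ 2 := fun s => by ring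
  simp_rw [he, integral_const_mul, integral_gaussian]
  rw [show π / (1/2 : ℝ) = 2 * π by ring]
  exact inv_mul_cancel₀ (Real.sqrt_ne_zero'.2 (by positivity))

lemma stdNormalCDF_neg (d : ℝ) : stdNormalCDF (-d) = 1 - stdNormalCDF d := by
  have hint := stdGauss_integrable
  have h1 : stdNormalCDF (-d)
      = ∫ s in Set.Ioi d, (Real.sqrt (2 * π))⁻¹ * Real.exp (-s ^ 2 / 2) := by
    rw [stdNormalCDF]
    have h := integral_comp_neg_Iic (-d)
      (fun s : ℝ => (Real.sqrt (2 * π))⁻¹ * Real.exp (-s ^ 2 / 2))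
    rw [neg_neg] at h
    simp only [neg_sq] at h
    rw [← h]
  have h2 := intervalIntegral.integral_Iic_add_Ioi (b := d) hint.integrableOn hint.integrableOn
  rw [stdGauss_total] at h2
  rw [h1, ← h2, stdNormalCDF]; ring

lemma gaussPDF_integrable (v m : ℝ) (hv : 0 < v) :
    Integrable (fun u : ℝ => (Real.sqrt (2 * π * v))⁻¹ * Real.exp (-(u - m) ^ 2 / (2 * v))) := by
  have h := ((integrable_exp_neg_mul_sq (show (0:ℝ) < (2*v)⁻¹ by positivity)).comp_sub_right
    m).const_mul (Real.sqrt (2 * π * v))⁻¹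
  have he : ∀ u : ℝ, -(u - m) ^ 2 / (2 * v) = -(2*v)⁻¹ * (u - m) ^ 2 := fun u => by ring
  simpa [he] using h

lemma gauss_cdf (v m a : ℝ) (hv : 0 < v) :
    ∫ u in Set.Iic a, (Real.sqrt (2 * π * v))⁻¹ * Real.exp (-(u - m) ^ 2 / (2 * v))
      = stdNormalCDF ((a - m) / Real.sqrt v) := by
  have hs : 0 < Real.sqrt v := Real.sqrt_pos.2 hv
  set g : ℝ → ℝ := (Set.Iic a).indicator
      (fun u => (Real.sqrt (2 * π * v))⁻¹ * Real.exp (-(u - m) ^ 2 / (2 * v))) with hg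
  have h0 : ∫ u in Set.Iic a, (Real.sqrt (2 * π * v))⁻¹ * Real.exp (-(u - m) ^ 2 / (2 * v))
      = ∫ u, g u := (integral_indicator measurableSet_Iic).symm
  have h1 : (∫ s : ℝ, g (Real.sqrt v * s + m)) = (Real.sqrt v)⁻¹ * ∫ u, g u := by
    have h := MeasureTheory.Measure.integral_comp_mul_left (fun y : ℝ => g (y + m)) (Real.sqrt v)
    rw [abs_of_pos (inv_pos.2 hs), smul_eq_mul] at h
    rw [show (fun s : ℝ => g (Real.sqrt v * s + m))
        = fun s : ℝ => (fun y : ℝ => g (y + m)) (Real.sqrt v * s) from rfl, h,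
      integral_add_right_eq_self]
  have h2 : ∀ s : ℝ, g (Real.sqrt v * s + m)
      = (Set.Iic ((a - m) / Real.sqrt v)).indicator
          (fun s => (Real.sqrt (2 * π * v))⁻¹ * Real.exp (-s ^ 2 / 2)) s := by
    intro s
    have hmem : Real.sqrt v * s + m ≤ a ↔ s ≤ (a - m) / Real.sqrt v := by
      rw [le_div_iff₀ hs]
      constructor <;> intro h <;> nlinarith
    by_cases h : s ≤ (a - m) / Real.sqrt v
    · rw [hg, Set.indicator_of_mem (Set.mem_Iic.2 (hmem.2 h)),
        Set.indicator_of_mem (show s ∈ Set.Iic ((a - m) / Real.sqrt v) from Set.mem_Iic.2 h)]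
      congr 1
      rw [show Real.sqrt v * s + m - m = Real.sqrt v * s by ring, mul_pow,
        Real.sq_sqrt hv.le]
      congr 1
      field_simp
    · rw [hg, Set.indicator_of_notMem (fun hh => h (hmem.1 (Set.mem_Iic.1 hh))),
        Set.indicator_of_notMem (show s ∉ Set.Iic ((a - m) / Real.sqrt v) from
          fun hh => h (Set.mem_Iic.1 hh))]
  have h3 : ∫ u, g u = Real.sqrt v * ∫ s, g (Real.sqrt v * s + m) := by
    rw [h1]; field_simp
  rw [h0, h3]
  simp_rw [h2]
  rw [integral_indicator measurableSet_Iic, stdNormalCDF, ← integral_const_mul]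
  congr 1; funext s
  rw [show 2 * π * v = 2 * π * v from rfl, Real.sqrt_mul (by positivity : (0:ℝ) ≤ 2 * π) v,
    mul_inv]
  field_simp

lemma gauss_cdf_exp (v m a : ℝ) (hv : 0 < v) :
    ∫ u in Set.Iic a,
        Real.exp u * ((Real.sqrt (2 * π * v))⁻¹ * Real.exp (-(u - m) ^ 2 / (2 * v)))
      = Real.exp (m + v / 2) * stdNormalCDF ((a - (m + v)) / Real.sqrt v) := by
  have h2v : (2 * v : ℝ) ≠ 0 := by positivity
  have hpt : ∀ u : ℝ,
      Real.exp u * ((Real.sqrt (2 * π * v))⁻¹ * Real.exp (-(u - m) ^ 2 / (2 * v)))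
      = Real.exp (m + v / 2)
          * ((Real.sqrt (2 * π * v))⁻¹ * Real.exp (-(u - (m + v)) ^ 2 / (2 * v))) := by
    intro u
    rw [mul_left_comm, mul_left_comm (Real.exp (m + v / 2)), ← Real.exp_add, ← Real.exp_add]
    congr 2
    field_simp
    ring
  simp_rw [hpt]
  rw [integral_const_mul, gauss_cdf v (m + v) a hv]

lemma gaussPDF_exp_integrable (v m : ℝ) (hv : 0 < v) :
    Integrable (fun u : ℝ =>
      Real.exp u * ((Real.sqrt (2 * π * v))⁻¹ * Real.exp (-(u - m) ^ 2 / (2 * v)))) := by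
  have h2v : (2 * v : ℝ) ≠ 0 := by positivity
  have hpt : ∀ u : ℝ,
      Real.exp u * ((Real.sqrt (2 * π * v))⁻¹ * Real.exp (-(u - m) ^ 2 / (2 * v)))
      = Real.exp (m + v / 2)
          * ((Real.sqrt (2 * π * v))⁻¹ * Real.exp (-(u - (m + v)) ^ 2 / (2 * v))) := by
    intro u
    rw [mul_left_comm, mul_left_comm (Real.exp (m + v / 2)), ← Real.exp_add, ← Real.exp_add]
    congr 2
    field_simp
    ring
  simp_rw [hpt]
  exact (gaussPDF_integrable v (m + v) hv).const_mul _

/-- leading-order defaultable put price and put-call parity in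
the jump-to-default framework.  `B₁ = e^{-λ̄(T-t)} B₀` is the defaultable
discount factor (`l = 1`), `B₀` the default-free one; the put payoff includes
the strike received when default occurs before maturity, so
`Put₀ = B₁ ∫ (K - e^u)⁺ φ_{m,v}(u) du + K (B₀ - B₁)`.  Then
`Put₀ = -x + x N(d₁) - K B₁ N(d₂) + K B₀`, and put-call parity
`Put₀ - C₀ = -x + K B₀` holds with `C₀ = x N(d₁) - K B₁ N(d₂)`. -/
theorem defaultable_put_formula (v B₀ B₁ x K lam T t : ℝ)
    (hv : 0 < v) (hB₀ : 0 < B₀) (hlam : 0 ≤ lam) (htT : t ≤ T)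
    (hB₁ : B₁ = Real.exp (-lam * (T - t)) * B₀)
    (hx : 0 < x) (hK : 0 < K)
    (m d₁ d₂ Put₀ C₀ : ℝ)
    (hm : m = Real.log (x / B₁) - v / 2)
    (hd₁ : d₁ = (Real.log (x / (K * B₁)) + v / 2) / Real.sqrt v)
    (hd₂ : d₂ = (Real.log (x / (K * B₁)) - v / 2) / Real.sqrt v)
    (hPut : Put₀ = (∫ u : ℝ, max (K - Real.exp u) 0 * B₁ *
        ((Real.sqrt (2 * Real.pi * v))⁻¹ * Real.exp (-(u - m) ^ 2 / (2 * v))))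
        + K * B₀ - K * B₁)
    (hC : C₀ = x * stdNormalCDF d₁ - K * B₁ * stdNormalCDF d₂) :
    Put₀ = -x + x * stdNormalCDF d₁ - K * B₁ * stdNormalCDF d₂ + K * B₀ ∧
      Put₀ - C₀ = -x + K * B₀ := by
  have hB₁pos : 0 < B₁ := hB₁ ▸ mul_pos (Real.exp_pos _) hB₀
  have hsv : 0 < Real.sqrt v := Real.sqrt_pos.2 hv
  set φ : ℝ → ℝ := fun u => (Real.sqrt (2 * π * v))⁻¹ * Real.exp (-(u - m) ^ 2 / (2 * v))
    with hφ
  -- step 1: rewrite the integrand via an indicator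
  have hind : ∀ u : ℝ, max (K - Real.exp u) 0 * B₁ * φ u
      = B₁ * (Set.Iic (Real.log K)).indicator (fun u => (K - Real.exp u) * φ u) u := by
    intro u
    by_cases h : u ≤ Real.log K
    · rw [Set.indicator_of_mem (Set.mem_Iic.2 h)]
      have : Real.exp u ≤ K := by
        calc Real.exp u ≤ Real.exp (Real.log K) := Real.exp_le_exp.2 h
        _ = K := Real.exp_log hK
      rw [max_eq_left (by linarith)]
      ring
    · rw [Set.indicator_of_notMem (fun hh => h (Set.mem_Iic.1 hh))]
      have : K < Real.exp u := by
        calc K = Real.exp (Real.log K) := (Real.exp_log hK).symm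
        _ < Real.exp u := Real.exp_lt_exp.2 (lt_of_not_ge h)
      rw [max_eq_right (by linarith)]
      ring
  have hI : (∫ u : ℝ, max (K - Real.exp u) 0 * B₁ * φ u)
      = B₁ * ∫ u in Set.Iic (Real.log K), (K - Real.exp u) * φ u := by
    simp_rw [hind]
    rw [integral_const_mul, integral_indicator measurableSet_Iic]
  -- step 2: split the integral
  have hint1 : IntegrableOn (fun u : ℝ => K * φ u) (Set.Iic (Real.log K)) :=
    ((gaussPDF_integrable v m hv).const_mul K).integrableOn
  have hint2 : IntegrableOn (fun u : ℝ => Real.exp u * φ u) (Set.Iic (Real.log K)) :=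
    (gaussPDF_exp_integrable v m hv).integrableOn
  have hsplit : (∫ u in Set.Iic (Real.log K), (K - Real.exp u) * φ u)
      = (∫ u in Set.Iic (Real.log K), K * φ u)
        - ∫ u in Set.Iic (Real.log K), Real.exp u * φ u := by
    rw [← integral_sub hint1 hint2]
    congr 1; funext u; ring
  -- step 3: evaluate both pieces
  have hKint : (∫ u in Set.Iic (Real.log K), K * φ u)
      = K * stdNormalCDF ((Real.log K - m) / Real.sqrt v) := by
    rw [integral_const_mul, hφ, gauss_cdf v m (Real.log K) hv]
  have hEint : (∫ u in Set.Iic (Real.log K), Real.exp u * φ u)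
      = Real.exp (m + v / 2) * stdNormalCDF ((Real.log K - (m + v)) / Real.sqrt v) :=
    gauss_cdf_exp v m (Real.log K) hv
  -- step 4: identify the arguments with -d₂ and -d₁
  have hlogs : Real.log (x / B₁) = Real.log x - Real.log B₁ :=
    Real.log_div hx.ne' hB₁pos.ne'
  have hlogs2 : Real.log (x / (K * B₁)) = Real.log x - (Real.log K + Real.log B₁) := by
    rw [Real.log_div hx.ne' (by positivity), Real.log_mul hK.ne' hB₁pos.ne']
  have hd2' : (Real.log K - m) / Real.sqrt v = -d₂ := by
    rw [hd₂, hm, hlogs, hlogs2, ← neg_div]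
    ring_nf
  have hd1' : (Real.log K - (m + v)) / Real.sqrt v = -d₁ := by
    rw [hd₁, hm, hlogs, hlogs2, ← neg_div]
    ring_nf
  have hexp : Real.exp (m + v / 2) = x / B₁ := by
    rw [hm, show Real.log (x / B₁) - v / 2 + v / 2 = Real.log (x / B₁) by ring,
      Real.exp_log (by positivity)]
  -- assemble
  have hfirst : Put₀ = -x + x * stdNormalCDF d₁ - K * B₁ * stdNormalCDF d₂ + K * B₀ := by
    rw [hPut, hI, hsplit, hKint, hEint, hd2', hd1', hexp,
      stdNormalCDF_neg d₁, stdNormalCDF_neg d₂]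
    field_simp
    ring
  exact ⟨hfirst, by rw [hfirst, hC]; ring⟩
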